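/- Fix λ₀ > 0 and a > 0. For all sufficiently large L > 0 and every Poisson random variable K with parameter λ ≥ λ₀, one has P(|K − λ| > a·√λ·ln L) ≤ L^{−d·ln ln L}, where d = a·√λ₀/2. -/

import Mathlib

open MeasureTheory Real

lemma aux_mono (f f' : ℝ → ℝ) (hd : ∀ x, 0 ≤ x → HasDerivAt f (f' x) x)
    (h0 : f 0 = 0) (hf' : ∀ x, 0 ≤ x → 0 ≤ f' x) : ∀ x, 0 ≤ x → 0 ≤ f x := by
  have hmono : MonotoneOn f (Set.Ici 0) := by
    apply monotoneOn_of_deriv_nonneg (convex_Ici 0)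
    · exact fun x hx => ((hd x hx).continuousAt).continuousWithinAt
    · intro x hx
      rw [interior_Ici] at hx
      exact ((hd x (le_of_lt hx)).differentiableAt).differentiableWithinAt
    · intro x hx
      rw [interior_Ici] at hx
      rw [(hd x (le_of_lt hx)).deriv]
      exact hf' x (le_of_lt hx)
  intro x hx
  have := hmono (Set.self_mem_Ici) hx hx
  linarith

lemma aux_log_ge {x : ℝ} (hx : 0 < x) : 1 - 1/x ≤ Real.log x := by
  have h := Real.log_le_sub_one_of_pos (x := 1/x) (by positivity)
  rw [Real.log_div one_ne_zero (ne_of_gt hx), Real.log_one] at h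
  linarith

lemma aux_log_ge' {q : ℝ} (hq : 0 ≤ q) : q / (1+q) ≤ Real.log (1+q) := by
  have h1 : (0:ℝ) < 1 + q := by linarith
  have h := aux_log_ge h1
  have h2 : q / (1+q) = 1 - 1/(1+q) := by field_simp; ring
  linarith

lemma aux_exp_neg_le {s : ℝ} (hs : 0 ≤ s) : Real.exp (-s) ≤ 1 - s + s^2/2 := by
  have key := aux_mono (fun x => 1 - x + x^2/2 - Real.exp (-x))
      (fun x => -1 + x + Real.exp (-x)) ?_ (by norm_num) ?_ s hs
  · simpa using key
  · intro x _
    have h1 : HasDerivAt (fun x : ℝ => Real.exp (-x)) (Real.exp (-x) * (-1)) x :=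
      (hasDerivAt_neg x).exp
    have h2 : HasDerivAt (fun x : ℝ => 1 - x + x^2/2) (-1 + x) x := by
      have := ((hasDerivAt_pow 2 x).div_const 2)
      have h3 : HasDerivAt (fun x : ℝ => 1 - x) (-1) x := by
        simpa using (hasDerivAt_id x).const_sub 1
      refine (h3.add this).congr_deriv ?_
      push_cast; ring
    refine (h2.sub h1).congr_deriv ?_
    ring
  · intro x hx
    have := Real.add_one_le_exp (-x)
    show (0:ℝ) ≤ -1 + x + Real.exp (-x)
    linarith

lemma aux_h2 {q : ℝ} (hq : 0 ≤ q) : q^2/(2*(1+q)) ≤ (1+q)*Real.log (1+q) - q := by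
  have h1q : (0:ℝ) < 1 + q := by linarith
  have key := aux_mono (fun q => 2*(1+q)^2*Real.log (1+q) - (3*q^2 + 2*q))
      (fun q => 4*(1+q)*Real.log (1+q) - 4*q) ?_ (by norm_num) ?_ q hq
  · rw [div_le_iff₀ (by linarith)]
    nlinarith [key]
  · intro x hx
    have hx1 : (0:ℝ) < 1 + x := by linarith
    have h : HasDerivAt (fun x : ℝ => 1 + x) 1 x := by
      simpa using (hasDerivAt_id x).const_add 1
    have hlog : HasDerivAt (fun x : ℝ => Real.log (1+x)) (1/(1+x)) x := by
      simpa using h.log (ne_of_gt hx1)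
    have hsq : HasDerivAt (fun x : ℝ => 2*(1+x)^2) (4*(1+x)) x := by
      have := (h.pow 2).const_mul (2:ℝ)
      refine this.congr_deriv ?_
      push_cast; ring
    have hprod : HasDerivAt (fun x : ℝ => 2*(1+x)^2*Real.log (1+x))
        (4*(1+x)*Real.log (1+x) + 2*(1+x)) x := by
      refine (hsq.mul hlog).congr_deriv ?_
      field_simp
    have hpoly : HasDerivAt (fun x : ℝ => 3*x^2 + 2*x) (6*x + 2) x := by
      have ha := (hasDerivAt_pow 2 x).const_mul (3:ℝ)
      have hb := (hasDerivAt_id x).const_mul (2:ℝ)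
      refine (ha.add hb).congr_deriv ?_
      push_cast; ring
    refine (hprod.sub hpoly).congr_deriv ?_
    ring
  · intro x hx
    have hx1 : (0:ℝ) < 1 + x := by linarith
    have := aux_log_ge' hx
    show (0:ℝ) ≤ 4*(1+x)*Real.log (1+x) - 4*x
    have h2 : x ≤ (1+x) * Real.log (1+x) := by
      rw [← div_le_iff₀' hx1] at *
      linarith [this]
    linarith

lemma aux_h1 {q : ℝ} (hq : 1 ≤ q) : q*(Real.log q - 1) ≤ (1+q)*Real.log (1+q) - q := by
  have h0 : (0:ℝ) < q := by linarith
  have hlq : 0 ≤ Real.log q := Real.log_nonneg hq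
  have hmono : Real.log q ≤ Real.log (1+q) := Real.log_le_log h0 (by linarith)
  nlinarith [Real.log_nonneg (show (1:ℝ) ≤ 1 + q by linarith)]

lemma aux_term_eq (lam s c : ℝ) (n : ℕ) :
    Real.exp (-lam) * lam ^ n / n.factorial * Real.exp (s * n + c)
      = (Real.exp (-lam) * Real.exp c) * ((lam * Real.exp s) ^ n / n.factorial) := by
  rw [Real.exp_add, mul_pow, mul_comm s (n:ℝ), Real.exp_nat_mul]
  ring

lemma aux_summable (lam s c : ℝ) :
    Summable (fun n : ℕ => Real.exp (-lam) * lam ^ n / n.factorial * Real.exp (s * n + c)) := by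
  have := (Real.summable_pow_div_factorial (lam * Real.exp s)).mul_left
    (Real.exp (-lam) * Real.exp c)
  refine this.congr (fun n => ?_)
  exact (aux_term_eq lam s c n).symm

lemma aux_series (lam s c : ℝ) :
    ∑' n : ℕ, Real.exp (-lam) * lam ^ n / n.factorial * Real.exp (s * n + c)
      = Real.exp (lam * Real.exp s - lam + c) := by
  calc ∑' n : ℕ, Real.exp (-lam) * lam ^ n / n.factorial * Real.exp (s * n + c)
      = ∑' n : ℕ, (Real.exp (-lam) * Real.exp c) * ((lam * Real.exp s) ^ n / n.factorial) :=
        tsum_congr (aux_term_eq lam s c)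
    _ = (Real.exp (-lam) * Real.exp c) * ∑' n : ℕ, (lam * Real.exp s) ^ n / n.factorial :=
        tsum_mul_left
    _ = (Real.exp (-lam) * Real.exp c) * Real.exp (lam * Real.exp s) := by
        rw [Real.exp_eq_exp_ℝ, NormedSpace.exp_eq_tsum_div]
    _ = Real.exp (lam * Real.exp s - lam + c) := by
        rw [← Real.exp_add, ← Real.exp_add]; ring_nf

lemma aux_meas_bound {Ω : Type} [MeasurableSpace Ω] (μ : Measure Ω) (K : Ω → ℕ)
    (p g : ℕ → ℝ) (hp : ∀ n, μ {ω | K ω = n} = ENNReal.ofReal (p n))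
    (P : ℕ → Prop) (hg0 : ∀ n, 0 ≤ g n) (hgs : Summable g)
    (hpg : ∀ n, P n → p n ≤ g n) :
    μ {ω | P (K ω)} ≤ ENNReal.ofReal (∑' n, g n) := by
  have h1 : μ {ω | P (K ω)} ≤ ∑' n, μ {ω | K ω = n ∧ P n} := by
    refine le_trans (measure_mono ?_) (measure_iUnion_le (fun n => {ω | K ω = n ∧ P n}))
    intro ω hω
    exact Set.mem_iUnion.2 ⟨K ω, rfl, hω⟩
  refine h1.trans ?_
  rw [ENNReal.ofReal_tsum_of_nonneg hg0 hgs]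
  refine ENNReal.tsum_le_tsum fun n => ?_
  by_cases h : P n
  · exact le_trans (measure_mono fun ω hω => hω.1)
      (le_trans (le_of_eq (hp n)) (ENNReal.ofReal_le_ofReal (hpg n h)))
  · have he : {ω | K ω = n ∧ P n} = ∅ := by
      ext ω; simp [h]
    simp [he]

lemma chernoff_upper {Ω : Type} [MeasurableSpace Ω] (μ : Measure Ω) (K : Ω → ℕ)
    (lam : ℝ) (hlam : 0 < lam)
    (hpmf : ∀ n : ℕ, μ {ω | K ω = n}
      = ENNReal.ofReal (Real.exp (-lam) * lam ^ n / n.factorial))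
    (s c : ℝ) (hs : 0 ≤ s) :
    μ {ω | c < (K ω : ℝ)} ≤ ENNReal.ofReal (Real.exp (lam * Real.exp s - lam + (-(s*c)))) := by
  rw [← aux_series lam s (-(s*c))]
  refine aux_meas_bound μ K _
    (fun n => Real.exp (-lam) * lam ^ n / n.factorial * Real.exp (s * n + -(s*c)))
    hpmf (fun n => c < (n:ℝ)) (fun n => by positivity) (aux_summable lam s _) ?_
  · intro n hn
    have hp0 : 0 ≤ Real.exp (-lam) * lam ^ n / n.factorial := by positivity
    have h1 : (1:ℝ) ≤ Real.exp (s * n + -(s*c)) := by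
      rw [← Real.exp_zero]
      apply Real.exp_le_exp.2
      have : (0:ℝ) ≤ s * ((n:ℝ) - c) := mul_nonneg hs (by linarith)
      linarith [this]
    nlinarith

lemma chernoff_lower {Ω : Type} [MeasurableSpace Ω] (μ : Measure Ω) (K : Ω → ℕ)
    (lam : ℝ) (hlam : 0 < lam)
    (hpmf : ∀ n : ℕ, μ {ω | K ω = n}
      = ENNReal.ofReal (Real.exp (-lam) * lam ^ n / n.factorial))
    (s c : ℝ) (hs : 0 ≤ s) :
    μ {ω | (K ω : ℝ) < c} ≤ ENNReal.ofReal (Real.exp (lam * Real.exp (-s) - lam + s*c)) := by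
  rw [← aux_series lam (-s) (s*c)]
  refine aux_meas_bound μ K _
    (fun n => Real.exp (-lam) * lam ^ n / n.factorial * Real.exp (-s * n + s*c))
    hpmf (fun n => (n:ℝ) < c) (fun n => by positivity) (aux_summable lam (-s) _) ?_
  · intro n hn
    have hp0 : 0 ≤ Real.exp (-lam) * lam ^ n / n.factorial := by positivity
    have h1 : (1:ℝ) ≤ Real.exp (-s * n + s*c) := by
      rw [← Real.exp_zero]
      apply Real.exp_le_exp.2
      have : (0:ℝ) ≤ s * (c - (n:ℝ)) := mul_nonneg hs (by linarith)
      linarith [this]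
    nlinarith


set_option maxHeartbeats 1000000 in
/-- Large deviation bound: for `λ ≥ λ₀` and all sufficiently large `L`,
`P(|K - λ| > a √λ ln L) ≤ L^(-d ln ln L)` with `d = a √λ₀ / 2`. -/
theorem poisson_logL_deviation (lam₀ a : ℝ) (hlam₀ : 0 < lam₀) (ha : 0 < a) :
    ∃ L₀ : ℝ, ∀ L : ℝ, L₀ ≤ L →
      ∀ {Ω : Type} [MeasurableSpace Ω] (μ : Measure Ω), IsProbabilityMeasure μ →
      ∀ (K : Ω → ℕ) (lam : ℝ), lam₀ ≤ lam →
      (∀ n : ℕ, μ {ω | K ω = n}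
        = ENNReal.ofReal (Real.exp (-lam) * lam ^ n / n.factorial)) →
      μ {ω | a * Real.sqrt lam * Real.log L < |(K ω : ℝ) - lam|}
        ≤ ENNReal.ofReal (L ^ (-(a * Real.sqrt lam₀ / 2) * Real.log (Real.log L))) := by
  have hsl0 : 0 < Real.sqrt lam₀ := Real.sqrt_pos.2 hlam₀
  obtain ⟨d, hd_def⟩ : ∃ x : ℝ, x = a * Real.sqrt lam₀ / 2 := ⟨_, rfl⟩
  have hd : 0 < d := by rw [hd_def]; positivity
  obtain ⟨C, hC_def⟩ : ∃ x : ℝ, x = a^2/(2*(1+Real.exp 2)) := ⟨_, rfl⟩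
  have hC : 0 < C := by rw [hC_def]; positivity
  obtain ⟨u₀, hu₀_def⟩ : ∃ x : ℝ, x = max 1 (max (8*d/C) (Real.log 2/(4*d))) := ⟨_, rfl⟩
  have hu₀1 : (1:ℝ) ≤ u₀ := by rw [hu₀_def]; exact le_max_left _ _
  have hu₀2 : 8*d/C ≤ u₀ := by rw [hu₀_def]; exact le_trans (le_max_left _ _) (le_max_right _ _)
  have hu₀3 : Real.log 2/(4*d) ≤ u₀ := by
    rw [hu₀_def]; exact le_trans (le_max_right _ _) (le_max_right _ _)
  obtain ⟨x₀, hx₀_def⟩ : ∃ x : ℝ, x = max (u₀^4) (Real.log 2/(a*Real.sqrt lam₀)) := ⟨_, rfl⟩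
  refine ⟨Real.exp x₀, ?_⟩
  intro L hL Ω _ μ _ K lam hlam hpmf
  have hL0 : 0 < L := lt_of_lt_of_le (Real.exp_pos _) hL
  obtain ⟨ℓ, hℓ_def⟩ : ∃ x : ℝ, x = Real.log L := ⟨_, rfl⟩
  have hxℓ : x₀ ≤ ℓ := by
    rw [hℓ_def, ← Real.log_exp x₀]
    exact Real.log_le_log (Real.exp_pos _) hL
  have hℓu : u₀^4 ≤ ℓ := le_trans (by rw [hx₀_def]; exact le_max_left _ _) hxℓ
  have hℓx2 : Real.log 2/(a*Real.sqrt lam₀) ≤ ℓ :=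
    le_trans (by rw [hx₀_def]; exact le_max_right _ _) hxℓ
  have hℓ1 : (1:ℝ) ≤ ℓ :=
    le_trans (by nlinarith [hu₀1, sq_nonneg (u₀^2 - 1), sq_nonneg (u₀ - 1)] : (1:ℝ) ≤ u₀^4) hℓu
  have hℓ0 : (0:ℝ) < ℓ := by linarith
  obtain ⟨m, hm_def⟩ : ∃ x : ℝ, x = Real.log ℓ := ⟨_, rfl⟩
  have hm0 : 0 ≤ m := by rw [hm_def]; exact Real.log_nonneg hℓ1
  -- u = fourth root of ℓ
  obtain ⟨u, hu_def⟩ : ∃ x : ℝ, x = Real.sqrt (Real.sqrt ℓ) := ⟨_, rfl⟩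
  have hsℓ0 : 0 ≤ Real.sqrt ℓ := Real.sqrt_nonneg _
  have hu2 : u^2 = Real.sqrt ℓ := by rw [hu_def]; exact Real.sq_sqrt hsℓ0
  have hu4 : u^4 = ℓ := by
    rw [show u^4 = (u^2)^2 by ring, hu2]
    exact Real.sq_sqrt (le_of_lt hℓ0)
  have huu₀ : u₀ ≤ u := by
    have h1 : Real.sqrt (u₀^4) = u₀^2 := by
      rw [show u₀^4 = (u₀^2)^2 by ring]
      exact Real.sqrt_sq (by positivity)
    have h2 : Real.sqrt (u₀^2) = u₀ := Real.sqrt_sq (by linarith)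
    calc u₀ = Real.sqrt (Real.sqrt (u₀^4)) := by rw [h1, h2]
      _ ≤ u := by
          rw [hu_def]
          exact Real.sqrt_le_sqrt (Real.sqrt_le_sqrt hℓu)
  have hu1 : (1:ℝ) ≤ u := le_trans hu₀1 huu₀
  have hmu : m ≤ 4*u := by
    have h1 : m = 4 * Real.log u := by
      rw [hm_def, hu_def, Real.log_sqrt hsℓ0, Real.log_sqrt (le_of_lt hℓ0)]
      ring
    have h2 : Real.log u ≤ u - 1 := Real.log_le_sub_one_of_pos (by linarith)
    linarith
  have hCu : 8*d ≤ C*u := by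
    have h := le_trans hu₀2 huu₀
    rw [div_le_iff₀ hC] at h
    linarith [h]
  have hdu : Real.log 2 ≤ 4*d*u := by
    have h := le_trans hu₀3 huu₀
    rw [div_le_iff₀ (by positivity : (0:ℝ) < 4*d)] at h
    linarith [h]
  have F12 : d*ℓ*m + Real.log 2 ≤ C*(ℓ*Real.sqrt ℓ) := by
    have h1 : d*ℓ*m ≤ 4*d*u^5 := by
      calc d*ℓ*m ≤ d*ℓ*(4*u) := mul_le_mul_of_nonneg_left hmu (by positivity)
        _ = 4*d*u^5 := by rw [← hu4]; ring
    have h2 : ℓ*Real.sqrt ℓ = u^6 := by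
      rw [← hu2, ← hu4]; ring
    rw [h2]
    have hu5 : (0:ℝ) ≤ u^5 := by positivity
    have p1 : 8*d*u^5 ≤ C*u*u^5 := mul_le_mul_of_nonneg_right hCu hu5
    have p1' : C*u*u^5 = C*u^6 := by ring
    have p2 : u^1 ≤ u^5 := pow_le_pow_right₀ hu1 (by norm_num)
    have q1 : 4*d*u ≤ 4*d*u^5 := by
      have := mul_le_mul_of_nonneg_left p2 (by positivity : (0:ℝ) ≤ 4*d)
      simpa using this
    linarith [h1, hdu, p1, q1]
  obtain ⟨Q, hQ_def⟩ : ∃ x : ℝ, x = Real.exp 2 * Real.sqrt ℓ := ⟨_, rfl⟩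
  have hsℓ1 : (1:ℝ) ≤ Real.sqrt ℓ := by
    rw [show (1:ℝ) = Real.sqrt 1 by simp]
    exact Real.sqrt_le_sqrt hℓ1
  have he2 : (1:ℝ) ≤ Real.exp 2 := by
    rw [← Real.exp_zero]; exact Real.exp_le_exp.2 (by norm_num)
  have hQ1 : (1:ℝ) ≤ Q := by
    rw [hQ_def]
    calc (1:ℝ) = 1*1 := by ring
      _ ≤ Real.exp 2 * Real.sqrt ℓ := mul_le_mul he2 hsℓ1 (by norm_num) (by positivity)
  have F2 : d*ℓ*m + Real.log 2 ≤ a^2*ℓ^2/(2*(1+Q)) := by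
    refine le_trans F12 ?_
    rw [le_div_iff₀ (by linarith [hQ1] : (0:ℝ) < 2*(1+Q))]
    have hsq : Real.sqrt ℓ * Real.sqrt ℓ = ℓ := Real.mul_self_sqrt (le_of_lt hℓ0)
    have h1 : 1 + Q ≤ (1 + Real.exp 2) * Real.sqrt ℓ := by
      rw [hQ_def]
      nlinarith [hsℓ1, he2, Real.exp_pos 2]
    have hpos : (0:ℝ) ≤ C*(ℓ*Real.sqrt ℓ) := by positivity
    have h2 : C*(ℓ*Real.sqrt ℓ)*(2*(1+Q))
        ≤ C*(ℓ*Real.sqrt ℓ)*(2*((1 + Real.exp 2) * Real.sqrt ℓ)) :=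
      mul_le_mul_of_nonneg_left (by linarith) hpos
    refine le_trans h2 (le_of_eq ?_)
    have hne : (2*(1+Real.exp 2)) ≠ 0 := by positivity
    have hCmul : C * (2*(1+Real.exp 2)) = a^2 := by
      rw [hC_def]; exact div_mul_cancel₀ _ hne
    calc C*(ℓ*Real.sqrt ℓ)*(2*((1 + Real.exp 2) * Real.sqrt ℓ))
        = (C*(2*(1+Real.exp 2))) * (ℓ*(Real.sqrt ℓ*Real.sqrt ℓ)) := by ring
      _ = a^2*(ℓ*ℓ) := by rw [hCmul, hsq]
      _ = a^2*ℓ^2 := by ring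
  have F1 : d*ℓ*m + Real.log 2 ≤ a^2*ℓ^2/2 := by
    refine le_trans F2 ?_
    apply div_le_div_of_nonneg_left (by positivity) (by norm_num) (by linarith [hQ1])
  have F3 : Real.log 2 ≤ a*Real.sqrt lam₀*ℓ := by
    rw [div_le_iff₀ (by positivity)] at hℓx2
    linarith [hℓx2]
  -- lambda facts
  have hlam0 : 0 < lam := lt_of_lt_of_le hlam₀ hlam
  obtain ⟨r, hr_def⟩ : ∃ x : ℝ, x = Real.sqrt lam := ⟨_, rfl⟩
  have hr0 : 0 < r := by rw [hr_def]; exact Real.sqrt_pos.2 hlam0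
  have hr2 : r^2 = lam := by rw [hr_def]; exact Real.sq_sqrt (le_of_lt hlam0)
  have hrr : Real.sqrt lam₀ ≤ r := by rw [hr_def]; exact Real.sqrt_le_sqrt hlam
  obtain ⟨t, ht_def⟩ : ∃ x : ℝ, x = a * r * ℓ := ⟨_, rfl⟩
  have ht0 : 0 < t := by rw [ht_def]; exact mul_pos (mul_pos ha hr0) hℓ0
  obtain ⟨q, hq_def⟩ : ∃ x : ℝ, x = t / lam := ⟨_, rfl⟩
  have hq0 : 0 < q := by rw [hq_def]; exact div_pos ht0 hlam0
  have hqlam : q * lam = t := by rw [hq_def]; exact div_mul_cancel₀ t (ne_of_gt hlam0)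
  have ht2 : t^2 = a^2*ℓ^2*lam := by rw [ht_def, ← hr2]; ring
  have hqsq : lam * q^2 = a^2*ℓ^2 := by
    rw [hq_def, div_pow, ht2]
    field_simp
  -- the common exponent bound target
  have key : ∀ E : ℝ, d*ℓ*m + Real.log 2 ≤ -E →
      ENNReal.ofReal (Real.exp E) ≤ ENNReal.ofReal (Real.exp (-(d*ℓ*m)) / 2) := by
    intro E hE
    apply ENNReal.ofReal_le_ofReal
    have h : Real.exp E ≤ Real.exp (-(d*ℓ*m) - Real.log 2) :=
      Real.exp_le_exp.2 (by linarith)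
    rw [Real.exp_sub, Real.exp_log (by norm_num : (0:ℝ) < 2)] at h
    linarith
  -- upper tail
  obtain ⟨s, hs_def⟩ : ∃ x : ℝ, x = Real.log (1 + q) := ⟨_, rfl⟩
  have hs0 : 0 ≤ s := by rw [hs_def]; exact Real.log_nonneg (by linarith)
  have hexps : Real.exp s = 1 + q := by rw [hs_def]; exact Real.exp_log (by linarith)
  have hupper := chernoff_upper μ K lam hlam0 hpmf s (lam + t) hs0
  have hup2 : ENNReal.ofReal (Real.exp (lam * Real.exp s - lam + -(s*(lam+t))))
      ≤ ENNReal.ofReal (Real.exp (-(d*ℓ*m)) / 2) := by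
    apply key
    have hexpand : lam * Real.exp s - lam + -(s*(lam+t))
        = -(lam * ((1+q)*Real.log (1+q) - q)) := by
      rw [hexps, ← hs_def, ← hqlam]
      ring
    rw [hexpand, neg_neg]
    by_cases hcase : q ≤ Q
    · -- small q regime
      have h1 := aux_h2 (le_of_lt hq0)
      have h2 : lam * (q^2/(2*(1+q))) ≤ lam * ((1+q)*Real.log (1+q) - q) :=
        mul_le_mul_of_nonneg_left h1 (le_of_lt hlam0)
      have h3 : lam * (q^2/(2*(1+q))) = a^2*ℓ^2/(2*(1+q)) := by
        rw [← hqsq]; ring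
      have h4 : a^2*ℓ^2/(2*(1+Q)) ≤ a^2*ℓ^2/(2*(1+q)) := by
        apply div_le_div_of_nonneg_left (by positivity) (by linarith [hq0]) (by linarith)
      linarith [F2]
    · -- large q regime
      push_neg at hcase
      have hq1 : 1 ≤ q := le_trans hQ1 (le_of_lt hcase)
      have h1 := aux_h1 hq1
      have h2 : lam * (q*(Real.log q - 1)) ≤ lam * ((1+q)*Real.log (1+q) - q) :=
        mul_le_mul_of_nonneg_left h1 (le_of_lt hlam0)
      have hlogq : 2 + m/2 ≤ Real.log q := by
        have hQlog : Real.log Q = 2 + m/2 := by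
          rw [hQ_def, Real.log_mul (Real.exp_ne_zero 2)
            (by positivity), Real.log_exp, Real.log_sqrt (le_of_lt hℓ0), hm_def]
        rw [← hQlog]
        exact Real.log_le_log (by linarith) (le_of_lt hcase)
      have h3 : t * (1 + m/2) ≤ lam * (q*(Real.log q - 1)) := by
        have he : lam * (q*(Real.log q - 1)) = t * (Real.log q - 1) := by
          rw [← hqlam]; ring
        rw [he]
        apply mul_le_mul_of_nonneg_left (by linarith) (le_of_lt ht0)
      have h4 : a*Real.sqrt lam₀*ℓ*(1 + m/2) ≤ t * (1 + m/2) := by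
        apply mul_le_mul_of_nonneg_right _ (by linarith)
        rw [ht_def]
        apply mul_le_mul_of_nonneg_right _ (le_of_lt hℓ0)
        exact mul_le_mul_of_nonneg_left hrr (le_of_lt ha)
      have h5 : d*ℓ*m + Real.log 2 ≤ a*Real.sqrt lam₀*ℓ*(1 + m/2) := by
        have he : a*Real.sqrt lam₀*ℓ*(1 + m/2) = a*Real.sqrt lam₀*ℓ + d*ℓ*m := by
          rw [hd_def]; ring
        rw [he]
        linarith [F3]
      linarith
  -- lower tail
  obtain ⟨s', hs'_def⟩ : ∃ x : ℝ, x = t / lam := ⟨_, rfl⟩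
  have hs'0 : 0 ≤ s' := by rw [hs'_def]; exact le_of_lt (div_pos ht0 hlam0)
  have hlower := chernoff_lower μ K lam hlam0 hpmf s' (lam - t) hs'0
  have hlo2 : ENNReal.ofReal (Real.exp (lam * Real.exp (-s') - lam + s'*(lam-t)))
      ≤ ENNReal.ofReal (Real.exp (-(d*ℓ*m)) / 2) := by
    apply key
    have hs'lam : s' * lam = t := by rw [hs'_def]; exact div_mul_cancel₀ t (ne_of_gt hlam0)
    have hexp := aux_exp_neg_le hs'0
    have h1 : lam * Real.exp (-s') ≤ lam * (1 - s' + s'^2/2) :=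
      mul_le_mul_of_nonneg_left hexp (le_of_lt hlam0)
    have hss : lam * s'^2 = s' * t := by
      rw [← hs'lam]; ring
    have hst : s' * t = a^2*ℓ^2 := by
      have h := hs'lam
      have h2 : s' * t * lam = t * t := by
        calc s' * t * lam = (s' * lam) * t := by ring
          _ = t * t := by rw [h]
      have h3 : t * t = a^2*ℓ^2*lam := by rw [show t*t = t^2 by ring, ht2]
      have h4 : s' * t * lam = a^2*ℓ^2*lam := by rw [h2, h3]
      exact mul_right_cancel₀ (ne_of_gt hlam0) h4
    have h2 : lam * Real.exp (-s') - lam + s'*(lam-t) ≤ -(a^2*ℓ^2/2) := by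
      linarith [h1, hss, hst, hs'lam]
    linarith [F1]
  -- split the event
  have hgoalset : {ω : Ω | a * Real.sqrt lam * Real.log L < |(K ω : ℝ) - lam|}
      = {ω : Ω | t < |(K ω : ℝ) - lam|} := by
    rw [ht_def, hr_def, hℓ_def]
  have hsplit : {ω : Ω | t < |(K ω : ℝ) - lam|}
      ⊆ {ω : Ω | lam + t < (K ω : ℝ)} ∪ {ω : Ω | (K ω : ℝ) < lam - t} := by
    intro ω hω
    simp only [Set.mem_setOf_eq] at hω
    rcases lt_abs.1 hω with h | h
    · left
      show lam + t < (K ω : ℝ)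
      linarith [h]
    · right
      show (K ω : ℝ) < lam - t
      linarith [h]
  rw [hgoalset]
  calc μ {ω : Ω | t < |(K ω : ℝ) - lam|}
      ≤ μ ({ω : Ω | lam + t < (K ω : ℝ)} ∪ {ω : Ω | (K ω : ℝ) < lam - t}) := measure_mono hsplit
    _ ≤ μ {ω : Ω | lam + t < (K ω : ℝ)} + μ {ω : Ω | (K ω : ℝ) < lam - t} := measure_union_le _ _
    _ ≤ ENNReal.ofReal (Real.exp (-(d*ℓ*m)) / 2) + ENNReal.ofReal (Real.exp (-(d*ℓ*m)) / 2) :=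
        add_le_add (le_trans hupper hup2) (le_trans hlower hlo2)
    _ = ENNReal.ofReal (Real.exp (-(d*ℓ*m))) := by
        rw [← ENNReal.ofReal_add (by positivity) (by positivity)]
        congr 1
        ring
    _ = ENNReal.ofReal (L ^ (-(a * Real.sqrt lam₀ / 2) * Real.log (Real.log L))) := by
        congr 1
        rw [Real.rpow_def_of_pos hL0, ← hℓ_def, ← hm_def, ← hd_def]
        ring_nf
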